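/- Let p ≥ 3 be a prime and w ≥ p an integer. Then 2·k(p−1, w) < p^w. -/

import Mathlib

open Finset

/-! ### Auxiliary development -/

/-- The index type: weak compositions of `t` into `s` parts. -/
abbrev IdxT (s t : ℕ) := {g : Fin s → ℕ // ∑ i, g i = t}

instance idxFintype (s t : ℕ) : Fintype (IdxT s t) :=
  Fintype.subtype (Finset.Nat.antidiagonalTuple s t)
    (fun _ => Finset.Nat.mem_antidiagonalTuple)

/-- Tuples of partitions with prescribed total decompose as a sigma type. -/
def tupleEquiv (s t : ℕ) :
    { f : Fin s → Σ n : ℕ, Nat.Partition n // ∑ i, (f i).1 = t } ≃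
      (Σ g : IdxT s t, ∀ i, Nat.Partition (g.1 i)) where
  toFun F := ⟨⟨fun i => (F.1 i).1, F.2⟩, fun i => (F.1 i).2⟩
  invFun G := ⟨fun i => ⟨G.1.1 i, G.2 i⟩, G.1.2⟩
  left_inv F := rfl
  right_inv G := rfl

/-- Weak compositions are counted by multisets (stars and bars). -/
def idxSymEquiv (s t : ℕ) : IdxT s t ≃ Sym (Fin s) t where
  toFun g := ⟨∑ i, Multiset.replicate (g.1 i) i, by
    have hcard : Multiset.card (∑ i, Multiset.replicate (g.1 i) i)
        = ∑ i, Multiset.card (Multiset.replicate (g.1 i) i) :=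
      map_sum (⟨⟨Multiset.card, Multiset.card_zero⟩, Multiset.card_add⟩ :
        Multiset (Fin s) →+ ℕ) _ _
    simp only [hcard, Multiset.card_replicate]
    exact g.2⟩
  invFun m := ⟨fun i => m.1.count i, by
    have h1 : ∑ i ∈ m.1.toFinset, m.1.count i = Multiset.card m.1 :=
      Multiset.toFinset_sum_count_eq m.1
    have h2 : ∑ i ∈ m.1.toFinset, m.1.count i = ∑ i : Fin s, m.1.count i := by
      refine Finset.sum_subset (Finset.subset_univ _) ?_
      intro x _ hx
      simpa [Multiset.count_eq_zero] using hx
    rw [← h2, h1, m.2]⟩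
  left_inv g := by
    ext i
    simp only
    rw [Multiset.count_sum']
    simp [Multiset.count_replicate]
  right_inv m := by
    apply Subtype.ext
    simp only
    have h2 : ∑ i ∈ m.1.toFinset, Multiset.replicate (m.1.count i) i
        = ∑ i : Fin s, Multiset.replicate (m.1.count i) i := by
      refine Finset.sum_subset (Finset.subset_univ _) ?_
      intro x _ hx
      have : m.1.count x = 0 := by simpa [Multiset.count_eq_zero] using hx
      rw [this, Multiset.replicate_zero]
    rw [← h2]
    have h3 := Multiset.toFinset_sum_count_nsmul_eq m.1
    calc ∑ i ∈ m.1.toFinset, Multiset.replicate (m.1.count i) i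
        = ∑ i ∈ m.1.toFinset, m.1.count i • ({i} : Multiset (Fin s)) := by
          refine Finset.sum_congr rfl fun i _ => ?_
          rw [Multiset.nsmul_singleton]
      _ = m.1 := h3

lemma card_idx (s t : ℕ) : Fintype.card (IdxT s t) = (s + t - 1).choose t := by
  rw [Fintype.card_congr (idxSymEquiv s t), Sym.card_sym_eq_choose, Fintype.card_fin]

lemma card_partition_le (n : ℕ) : Fintype.card (Nat.Partition n) ≤ 2 ^ (n - 1) := by
  calc Fintype.card (Nat.Partition n) ≤ Fintype.card (Composition n) :=
        Fintype.card_le_of_surjective _ Nat.Partition.ofComposition_surj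
    _ = 2 ^ (n - 1) := composition_card n

lemma sum_sub_one_le : ∀ (s : ℕ) (g : Fin s → ℕ),
    ∑ i, (g i - 1) ≤ (∑ i, g i) - 1
  | 0, g => by simp
  | s + 1, g => by
    have ih := sum_sub_one_le s (fun i => g i.succ)
    rw [Fin.sum_univ_succ, Fin.sum_univ_succ (fun i => g i)]
    omega

/-- `kTuples s t` is the number of `s`-tuples `(λ₁, …, λ_s)` of integer partitions
(of arbitrary nonnegative integers) with `|λ₁| + ⋯ + |λ_s| = t`. -/
noncomputable def kTuples (s t : ℕ) : ℕ :=
  Nat.card { f : Fin s → Σ n : ℕ, Nat.Partition n // ∑ i, (f i).1 = t }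

lemma kTuples_eq (s t : ℕ) :
    kTuples s t = ∑ g : IdxT s t, ∏ i, Fintype.card (Nat.Partition (g.1 i)) := by
  rw [kTuples, Nat.card_congr (tupleEquiv s t), Nat.card_eq_fintype_card,
    Fintype.card_sigma]
  congr 1
  funext g
  rw [Fintype.card_pi]

lemma kTuples_le_sum (s t : ℕ) :
    kTuples s t ≤ ∑ g : IdxT s t, ∏ i, 2 ^ (g.1 i - 1) := by
  rw [kTuples_eq]
  exact Finset.sum_le_sum fun g _ => Finset.prod_le_prod' fun i _ => card_partition_le _

lemma kTuples_le (s t : ℕ) :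
    kTuples s t ≤ (s + t - 1).choose t * 2 ^ (t - 1) := by
  refine (kTuples_le_sum s t).trans ?_
  have h : ∀ g : IdxT s t, (∏ i, 2 ^ (g.1 i - 1)) ≤ 2 ^ (t - 1) := by
    intro g
    rw [Finset.prod_pow_eq_pow_sum]
    refine Nat.pow_le_pow_right (by norm_num) ?_
    have hle := sum_sub_one_le s g.1
    rw [g.2] at hle
    exact hle
  calc ∑ g : IdxT s t, ∏ i, 2 ^ (g.1 i - 1) ≤ ∑ _g : IdxT s t, 2 ^ (t - 1) :=
        Finset.sum_le_sum fun g _ => h g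
    _ = Fintype.card (IdxT s t) * 2 ^ (t - 1) := by
        rw [Finset.sum_const, Finset.card_univ, smul_eq_mul]
    _ = (s + t - 1).choose t * 2 ^ (t - 1) := by rw [card_idx]

/-! ### Numeric lemmas -/

lemma pow_add_le (x : ℕ) : ∀ k, x ^ (k + 1) + (k + 1) * x ^ k ≤ (x + 1) ^ (k + 1)
  | 0 => by simp
  | k + 1 => by
    have ih := pow_add_le x k
    have expand : (x ^ (k + 1) + (k + 1) * x ^ k) * (x + 1)
        = x ^ (k + 2) + (k + 2) * x ^ (k + 1) + (k + 1) * x ^ k := by ring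
    calc x ^ (k + 2) + (k + 2) * x ^ (k + 1)
        ≤ (x ^ (k + 1) + (k + 1) * x ^ k) * (x + 1) := by rw [expand]; omega
      _ ≤ (x + 1) ^ (k + 1) * (x + 1) := Nat.mul_le_mul_right _ ih
      _ = (x + 1) ^ (k + 2) := (pow_succ _ _).symm

lemma two_mul_pow_le (s : ℕ) : 2 * (s + 1) ^ (s + 1) ≤ (s + 2) ^ (s + 1) := by
  have h := pow_add_le (s + 1) s
  have h2 : (s + 1) * (s + 1) ^ s = (s + 1) ^ (s + 1) := by
    rw [pow_succ]; ring
  rw [h2] at h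
  have h3 : s + 1 + 1 = s + 2 := by omega
  rw [h3] at h
  omega

lemma choose_succ_le (n k : ℕ) (h : n ≤ 2 * k + 1) : n.choose (k + 1) ≤ n.choose k := by
  have h1 := Nat.choose_succ_right_eq n k
  have h2 : n.choose (k + 1) * (k + 1) ≤ n.choose k * (k + 1) := by
    rw [h1]
    exact Nat.mul_le_mul_left _ (by omega)
  exact Nat.le_of_mul_le_mul_right h2 (by omega)

lemma choose_central_le (s : ℕ) (hs : 1 ≤ s) :
    (2 * s).choose s ≤ 2 * (2 * s).choose (s + 1) := by
  have h1 := Nat.choose_succ_right_eq (2 * s) s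
  have h2 : 2 * s - s = s := by omega
  rw [h2] at h1
  have h3 : (2 * s).choose s * s ≤ 2 * (2 * s).choose (s + 1) * s := by
    calc (2 * s).choose s * s = (2 * s).choose (s + 1) * (s + 1) := h1.symm
      _ ≤ (2 * s).choose (s + 1) * (2 * s) := Nat.mul_le_mul_left _ (by omega)
      _ = 2 * (2 * s).choose (s + 1) * s := by ring
  exact Nat.le_of_mul_le_mul_right h3 (by omega)

lemma choose_ratio (s : ℕ) (hs : 1 ≤ s) :
    (2 * s + 2).choose (s + 2) ≤ 6 * (2 * s).choose (s + 1) := by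
  have p1 : (2 * s + 2).choose (s + 2) = (2 * s + 1).choose (s + 1) + (2 * s + 1).choose (s + 2) :=
    Nat.choose_succ_succ _ _
  have p2 : (2 * s + 1).choose (s + 2) ≤ (2 * s + 1).choose (s + 1) :=
    choose_succ_le _ _ (by omega)
  have p3 : (2 * s + 1).choose (s + 1) = (2 * s).choose s + (2 * s).choose (s + 1) :=
    Nat.choose_succ_succ _ _
  have p4 := choose_central_le s hs
  omega

lemma Qbase : ∀ s, 4 ≤ s → (2 * s).choose (s + 1) * 2 ^ (s + 1) < (s + 1) ^ (s + 1) := by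
  refine Nat.le_induction ?_ ?_
  · decide
  · intro s hs ih
    have h1 : 2 * (s + 1) = 2 * s + 2 := by ring
    rw [h1]
    have h2 : (2 * s + 2).choose (s + 1 + 1) ≤ 6 * (2 * s).choose (s + 1) :=
      choose_ratio s (by omega)
    calc (2 * s + 2).choose (s + 1 + 1) * 2 ^ (s + 1 + 1)
        ≤ 6 * (2 * s).choose (s + 1) * 2 ^ (s + 1 + 1) := Nat.mul_le_mul_right _ h2
      _ = 12 * ((2 * s).choose (s + 1) * 2 ^ (s + 1)) := by ring
      _ < 12 * (s + 1) ^ (s + 1) := by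
          exact Nat.mul_lt_mul_of_pos_left ih (by norm_num)
      _ ≤ (s + 2) * (2 * (s + 1) ^ (s + 1)) := by
          calc 12 * (s + 1) ^ (s + 1) ≤ (2 * (s + 2)) * (s + 1) ^ (s + 1) :=
                Nat.mul_le_mul_right _ (by omega)
            _ = (s + 2) * (2 * (s + 1) ^ (s + 1)) := by ring
      _ ≤ (s + 2) * (s + 2) ^ (s + 1) := Nat.mul_le_mul_left _ (two_mul_pow_le s)
      _ = (s + 2) ^ (s + 1 + 1) := (pow_succ' _ _).symm

lemma Qmain (s : ℕ) (hs : 4 ≤ s) :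
    ∀ w, s + 1 ≤ w → (s + w - 1).choose w * 2 ^ w < (s + 1) ^ w := by
  refine Nat.le_induction ?_ ?_
  · have h : s + (s + 1) - 1 = 2 * s := by omega
    rw [h]
    exact Qbase s hs
  · intro w hw ih
    have h1 : s + (w + 1) - 1 = (s + w - 1) + 1 := by omega
    rw [h1]
    have h2 : (s + w - 1 + 1).choose (w + 1)
        = (s + w - 1).choose w + (s + w - 1).choose (w + 1) :=
      Nat.choose_succ_succ _ _
    have h3 : (s + w - 1).choose (w + 1) ≤ (s + w - 1).choose w :=
      choose_succ_le _ _ (by omega)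
    have h4 : (s + w - 1 + 1).choose (w + 1) ≤ 2 * (s + w - 1).choose w := by omega
    calc (s + w - 1 + 1).choose (w + 1) * 2 ^ (w + 1)
        ≤ 2 * (s + w - 1).choose w * 2 ^ (w + 1) := Nat.mul_le_mul_right _ h4
      _ = 4 * ((s + w - 1).choose w * 2 ^ w) := by ring
      _ < 4 * (s + 1) ^ w := Nat.mul_lt_mul_of_pos_left ih (by norm_num)
      _ ≤ (s + 1) * (s + 1) ^ w := Nat.mul_le_mul_right _ (by omega)
      _ = (s + 1) ^ (w + 1) := (pow_succ' _ _).symm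

lemma S2 : ∀ w, 4 ≤ w → (w + 1) * 2 ^ w < 3 ^ w := by
  refine Nat.le_induction ?_ ?_
  · decide
  · intro w hw ih
    calc (w + 1 + 1) * 2 ^ (w + 1) = 2 * (w + 2) * 2 ^ w := by ring
      _ ≤ 3 * (w + 1) * 2 ^ w := Nat.mul_le_mul_right _ (by omega)
      _ = 3 * ((w + 1) * 2 ^ w) := by ring
      _ < 3 * 3 ^ w := Nat.mul_lt_mul_of_pos_left ih (by norm_num)
      _ = 3 ^ (w + 1) := (pow_succ' _ _).symm

lemma k23_le : kTuples 2 3 ≤ 12 := by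
  refine (kTuples_le_sum 2 3).trans ?_
  decide

/-! ### Main theorem -/

theorem two_mul_kTuples_lt_pow (p w : ℕ) (hp : p.Prime) (h3 : 3 ≤ p) (hw : p ≤ w) :
    2 * kTuples (p - 1) w < p ^ w := by
  rcases eq_or_lt_of_le h3 with h | h4
  · -- p = 3
    have hp3 : p = 3 := h.symm
    subst hp3
    norm_num
    rcases eq_or_lt_of_le hw with hw3 | hw4
    · rw [← hw3]
      have := k23_le
      have : 2 * kTuples 2 3 ≤ 24 := by omega
      calc 2 * kTuples 2 3 ≤ 24 := this
        _ < 3 ^ 3 := by norm_num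
    · have hw4 : 4 ≤ w := hw4
      have hk := kTuples_le 2 w
      have h1 : 2 + w - 1 = w + 1 := by omega
      rw [h1, Nat.choose_succ_self_right] at hk
      have hpow : 2 * 2 ^ (w - 1) = 2 ^ w := by
        rw [← pow_succ']
        congr 1
        omega
      calc 2 * kTuples 2 w ≤ 2 * ((w + 1) * 2 ^ (w - 1)) := by omega
        _ = (w + 1) * (2 * 2 ^ (w - 1)) := by ring
        _ = (w + 1) * 2 ^ w := by rw [hpow]
        _ < 3 ^ w := S2 w hw4
  · -- p ≥ 5
    have hp5 : 5 ≤ p := by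
      rcases eq_or_lt_of_le (show 4 ≤ p from h4) with h' | h'
      · exfalso
        rw [← h'] at hp
        norm_num at hp
      · omega
    set s := p - 1 with hs_def
    have hps : p = s + 1 := by omega
    have hs4 : 4 ≤ s := by omega
    have hk := kTuples_le s w
    have hw1 : 1 ≤ w := by omega
    have hpow : 2 * 2 ^ (w - 1) = 2 ^ w := by
      rw [← pow_succ']
      congr 1
      omega
    have hq := Qmain s hs4 w (by omega)
    calc 2 * kTuples s w ≤ 2 * ((s + w - 1).choose w * 2 ^ (w - 1)) := by omega
      _ = (s + w - 1).choose w * (2 * 2 ^ (w - 1)) := by ring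
      _ = (s + w - 1).choose w * 2 ^ w := by rw [hpow]
      _ < (s + 1) ^ w := hq
      _ = p ^ w := by rw [hps]
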